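/- Suppose f : B_1 × (−1,0) → ℝ satisfies the spatial weak-L³ bound sup_{−1<t<0} sup_{σ>0} σ³ |{x ∈ B_1 : |f(x,t)| > σ}| ≤ m³. Then for every 0 < r < 1 and 0 < ε < 1, sup_{−r²<t<0} r^{-1} ∫_{B_r} |f(x,t)|² dx ≤ C (ε² + ε^{-1} m³) with C an absolute constant. -/

import Mathlib

open MeasureTheory Metric Set

/-- If `f` on `B₁ × (−1,0)` satisfies the uniform-in-time spatial weak-`L³` bound
`sup_t sup_{σ>0} σ³ |{x ∈ B₁ : |f(x,t)| > σ}| ≤ m³`, then for `0 < r < 1`, `0 < ε < 1`,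
`sup_{−r²<t<0} r⁻¹ ∫_{B_r} |f(t)|² ≤ C (ε² + ε⁻¹ m³)`, `C` absolute. -/
theorem stmt15 :
    ∃ C : ℝ, 0 < C ∧ ∀ (m : ℝ) (f : ℝ → EuclideanSpace ℝ (Fin 3) → ℝ), 0 ≤ m →
      (∀ t, Measurable (f t)) →
      (∀ t ∈ Ioo (-1 : ℝ) 0, ∀ σ : ℝ, 0 < σ →
        σ ^ 3 * (volume {x ∈ ball (0 : EuclideanSpace ℝ (Fin 3)) 1 | σ < |f t x|}).toReal ≤ m ^ 3) →
      ∀ r ε : ℝ, 0 < r → r < 1 → 0 < ε → ε < 1 →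
        ∀ t ∈ Ioo (-r ^ 2) (0 : ℝ),
          (ENNReal.ofReal r)⁻¹ *
              ∫⁻ x in ball (0 : EuclideanSpace ℝ (Fin 3)) r, ENNReal.ofReal (f t x ^ 2)
            ≤ ENNReal.ofReal (C * (ε ^ 2 + ε⁻¹ * m ^ 3)) := by
  set V : ℝ := (volume (ball (0 : EuclideanSpace ℝ (Fin 3)) 1)).toReal with hVdef
  have hVpos : 0 < V :=
    ENNReal.toReal_pos (measure_ball_pos _ _ one_pos).ne' measure_ball_lt_top.ne
  refine ⟨V + 2, by linarith, ?_⟩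
  intro m f hm hmeas hweak r ε hr hr1 hε hε1 t ht
  set R : ℝ := ε / r with hRdef
  have hR : 0 < R := div_pos hε hr
  have ht1 : t ∈ Ioo (-1 : ℝ) 0 := ⟨lt_of_le_of_lt (by nlinarith) ht.1, ht.2⟩
  have hmble : Measurable fun x : EuclideanSpace ℝ (Fin 3) => |f t x| := (hmeas t).abs
  have hsetm : ∀ s : ℝ, MeasurableSet {x : EuclideanSpace ℝ (Fin 3) | s < |f t x|} :=
    fun s => measurableSet_lt measurable_const hmble
  set μ : Measure (EuclideanSpace ℝ (Fin 3)) :=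
    volume.restrict (ball (0 : EuclideanSpace ℝ (Fin 3)) r) with hμdef
  -- volume of ball r
  have hballr : volume (ball (0 : EuclideanSpace ℝ (Fin 3)) r) = ENNReal.ofReal (r ^ 3 * V) := by
    have hb := Measure.addHaar_ball (μ := (volume : Measure (EuclideanSpace ℝ (Fin 3))))
      0 hr.le
    rw [finrank_euclideanSpace_fin] at hb
    rw [hb, ENNReal.ofReal_mul (by positivity), hVdef,
      ENNReal.ofReal_toReal measure_ball_lt_top.ne]
  -- tail bound
  have tail : ∀ s : ℝ, 0 < s →
      μ {x | s < |f t x|} ≤ ENNReal.ofReal (m ^ 3 / s ^ 3) := by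
    intro s hs
    rw [hμdef, Measure.restrict_apply (hsetm s)]
    have hsub : {x : EuclideanSpace ℝ (Fin 3) | s < |f t x|} ∩ ball 0 r
        ⊆ {x ∈ ball (0 : EuclideanSpace ℝ (Fin 3)) 1 | s < |f t x|} :=
      fun x hx => ⟨ball_subset_ball hr1.le hx.2, hx.1⟩
    refine (measure_mono hsub).trans ?_
    have hfin : volume {x ∈ ball (0 : EuclideanSpace ℝ (Fin 3)) 1 | s < |f t x|} < ⊤ :=
      lt_of_le_of_lt (measure_mono fun x hx => hx.1) measure_ball_lt_top
    have h1 := hweak t ht1 s hs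
    rw [← ENNReal.ofReal_toReal hfin.ne]
    apply ENNReal.ofReal_le_ofReal
    rw [le_div_iff₀ (by positivity)]
    nlinarith [h1]
  -- layer cake
  have key : ∫⁻ x in ball (0 : EuclideanSpace ℝ (Fin 3)) r, ENNReal.ofReal (f t x ^ 2)
      = ∫⁻ s in Ioi (0 : ℝ), μ {x | s < |f t x|} * ENNReal.ofReal (2 * s) := by
    have h := lintegral_comp_eq_lintegral_meas_lt_mul μ
      (f := fun x => |f t x|) (g := fun s => 2 * s)
      (Filter.Eventually.of_forall fun x => abs_nonneg _) hmble.aemeasurable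
      (fun s _ => ((continuous_const.mul continuous_id').intervalIntegrable _ _))
      ((ae_restrict_iff' measurableSet_Ioi).2
        (Filter.Eventually.of_forall fun s hs => by simp only [Set.mem_Ioi] at hs; positivity))
    have heq : ∀ x : EuclideanSpace ℝ (Fin 3),
        (∫ s in (0:ℝ)..|f t x|, 2 * s) = f t x ^ 2 := by
      intro x
      rw [intervalIntegral.integral_const_mul, integral_id, sq_abs]
      ring
    simp only [heq] at h
    exact h
  rw [key, show Ioi (0:ℝ) = Ioc 0 R ∪ Ioi R from (Ioc_union_Ioi_eq_Ioi hR.le).symm,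
    lintegral_union measurableSet_Ioi (Set.Ioc_disjoint_Ioi le_rfl)]
  -- part 1 bound
  have b1 : ∫⁻ s in Ioc (0:ℝ) R, μ {x | s < |f t x|} * ENNReal.ofReal (2 * s)
      ≤ ENNReal.ofReal (r * (V * ε ^ 2)) := by
    have mono : ∫⁻ s in Ioc (0:ℝ) R, μ {x | s < |f t x|} * ENNReal.ofReal (2 * s)
        ≤ ∫⁻ s in Ioc (0:ℝ) R, ENNReal.ofReal (r ^ 3 * V) * ENNReal.ofReal (2 * s) := by
      refine setLIntegral_mono (by fun_prop) fun s hs => ?_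
      gcongr
      rw [← hballr]
      exact hμdef ▸ (Measure.restrict_apply (hsetm s)).le.trans
        (measure_mono Set.inter_subset_right)
    refine mono.trans ?_
    rw [lintegral_const_mul _ (by fun_prop),
      ← ofReal_integral_eq_lintegral_ofReal (f := fun s : ℝ => 2 * s)
        ((continuous_const.mul continuous_id').integrableOn_Ioc)
        ((ae_restrict_iff' measurableSet_Ioc).2
          (Filter.Eventually.of_forall fun s hs => by obtain ⟨h1, -⟩ := hs; positivity)),
      ← ENNReal.ofReal_mul (by positivity)]
    apply ENNReal.ofReal_le_ofReal
    have hint : (∫ s in Ioc (0:ℝ) R, 2 * s) = R ^ 2 := by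
      rw [← intervalIntegral.integral_of_le hR.le, intervalIntegral.integral_const_mul,
        integral_id]
      ring
    rw [hint, hRdef]
    rw [div_pow]
    rw [show r ^ 3 * V * (ε ^ 2 / r ^ 2) = r * (V * ε ^ 2) * (r ^ 2 / r ^ 2) by ring,
      div_self (by positivity), mul_one]
  -- part 2 bound
  have b2 : ∫⁻ s in Ioi R, μ {x | s < |f t x|} * ENNReal.ofReal (2 * s)
      ≤ ENNReal.ofReal (r * (2 * ε⁻¹ * m ^ 3)) := by
    have mono : ∫⁻ s in Ioi R, μ {x | s < |f t x|} * ENNReal.ofReal (2 * s)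
        ≤ ∫⁻ s in Ioi R, ENNReal.ofReal (2 * m ^ 3 * s ^ (-2 : ℝ)) := by
      refine setLIntegral_mono (by fun_prop) fun s hs => ?_
      have hs0 : 0 < s := hR.trans hs
      calc μ {x | s < |f t x|} * ENNReal.ofReal (2 * s)
          ≤ ENNReal.ofReal (m ^ 3 / s ^ 3) * ENNReal.ofReal (2 * s) := by
            gcongr; exact tail s hs0
        _ = ENNReal.ofReal (2 * m ^ 3 * s ^ (-2 : ℝ)) := by
            rw [← ENNReal.ofReal_mul (by positivity)]
            congr 1
            rw [Real.rpow_neg hs0.le, show (2:ℝ) = ((2:ℕ):ℝ) by norm_num,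
              Real.rpow_natCast]
            field_simp
    refine mono.trans ?_
    rw [← ofReal_integral_eq_lintegral_ofReal
        ((integrableOn_Ioi_rpow_of_lt (by norm_num) hR).const_mul _)
        ((ae_restrict_iff' measurableSet_Ioi).2
          (Filter.Eventually.of_forall fun s hs => by
            have : (0:ℝ) < s := hR.trans hs
            positivity))]
    apply ENNReal.ofReal_le_ofReal
    rw [MeasureTheory.integral_const_mul, integral_Ioi_rpow_of_lt (by norm_num) hR]
    rw [show (-2 : ℝ) + 1 = -1 by norm_num, Real.rpow_neg_one]
    rw [hRdef]
    apply le_of_eq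
    field_simp
  calc (ENNReal.ofReal r)⁻¹ *
        ((∫⁻ s in Ioc (0:ℝ) R, μ {x | s < |f t x|} * ENNReal.ofReal (2 * s)) +
          ∫⁻ s in Ioi R, μ {x | s < |f t x|} * ENNReal.ofReal (2 * s))
      ≤ (ENNReal.ofReal r)⁻¹ *
        (ENNReal.ofReal (r * (V * ε ^ 2)) + ENNReal.ofReal (r * (2 * ε⁻¹ * m ^ 3))) := by
        gcongr
    _ = ENNReal.ofReal (V * ε ^ 2 + 2 * ε⁻¹ * m ^ 3) := by
        rw [← ENNReal.ofReal_add (by positivity) (by positivity), ← mul_add,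
          ENNReal.ofReal_mul hr.le, ← mul_assoc,
          ENNReal.inv_mul_cancel (ENNReal.ofReal_pos.2 hr).ne' ENNReal.ofReal_ne_top, one_mul]
    _ ≤ ENNReal.ofReal ((V + 2) * (ε ^ 2 + ε⁻¹ * m ^ 3)) := by
        apply ENNReal.ofReal_le_ofReal
        have h1 : 0 ≤ ε⁻¹ * m ^ 3 := by positivity
        nlinarith [sq_nonneg ε]
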